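/- In a braided categorical group A, if parallel morphisms α_i, α'_i : x_i → y_i (i = 1, 2) have deviations β_1, β_2 ∈ π₁(A) respectively, then α_1 + α_2 and α'_1 + α'_2 : x_1 + x_2 → y_1 + y_2 have deviation β_1 + β_2. -/

import Mathlib

open CategoryTheory MonoidalCategory

universe v u

/-- A categorical group: a monoidal groupoid in which every object has a weak inverse. -/
class CategoricalGroup (A : Type u) [Groupoid.{v} A] [MonoidalCategory A] where
  neg : A → A
  iota : ∀ a : A, neg a ⊗ a ≅ 𝟙_ A

/-- `β ∈ π₁` is the deviation of the parallel morphisms `α, α' : x ⟶ y`: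
`ρ(y) ∘ (α + β) = α' ∘ ρ(x)`. -/
def IsDeviation {A : Type u} [Category.{v} A] [MonoidalCategory A]
    {x y : A} (α α' : x ⟶ y) (β : 𝟙_ A ⟶ 𝟙_ A) : Prop :=
  (α ⊗ₘ β) ≫ (ρ_ y).hom = (ρ_ x).hom ≫ α'

/-- The sum `β₁ + β₂` of two elements of `π₁`, i.e. the composite
`0 → 0+0 → 0+0 → 0` of `λ(0)⁻¹`, `β₁ ⊗ β₂` and `λ(0)`. -/
def pi1Add {A : Type u} [Category.{v} A] [MonoidalCategory A]
    (β₁ β₂ : 𝟙_ A ⟶ 𝟙_ A) : 𝟙_ A ⟶ 𝟙_ A :=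
  (λ_ (𝟙_ A)).inv ≫ (β₁ ⊗ₘ β₂) ≫ (λ_ (𝟙_ A)).hom

section AuxAct

variable {A : Type u} [Category.{v} A] [MonoidalCategory A]

/-- Auxiliary: the sum in `π₁` is just composition. -/
lemma pi1Add_eq_comp (β₁ β₂ : 𝟙_ A ⟶ 𝟙_ A) : pi1Add β₁ β₂ = β₁ ≫ β₂ := by
  unfold pi1Add
  rw [MonoidalCategory.tensorHom_def]
  simp [unitors_equal, unitors_inv_equal]

/-- Auxiliary: the right action of `π₁` on an object. -/
def actR (x : A) (β : 𝟙_ A ⟶ 𝟙_ A) : x ⟶ x := (ρ_ x).inv ≫ x ◁ β ≫ (ρ_ x).hom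

/-- Auxiliary: the left action of `π₁` on an object. -/
def actL (x : A) (β : 𝟙_ A ⟶ 𝟙_ A) : x ⟶ x := (λ_ x).inv ≫ β ▷ x ≫ (λ_ x).hom

lemma actR_comp (x : A) (β₁ β₂ : 𝟙_ A ⟶ 𝟙_ A) :
    actR x (β₁ ≫ β₂) = actR x β₁ ≫ actR x β₂ := by
  simp [actR, MonoidalCategory.whiskerLeft_comp]

lemma actR_tensor (x y : A) (β : 𝟙_ A ⟶ 𝟙_ A) :
    actR (x ⊗ y) β = x ◁ actR y β := by
  unfold actR
  rw [rightUnitor_tensor_hom, rightUnitor_tensor_inv,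
    MonoidalCategory.whiskerLeft_comp, MonoidalCategory.whiskerLeft_comp,
    associator_naturality_right_assoc, Category.assoc, Iso.inv_hom_id_assoc]

lemma actL_tensor (x y : A) (β : 𝟙_ A ⟶ 𝟙_ A) :
    actL (x ⊗ y) β = actL x β ▷ y := by
  unfold actL
  rw [leftUnitor_tensor_hom, leftUnitor_tensor_inv,
    comp_whiskerRight, comp_whiskerRight,
    associator_inv_naturality_left_assoc, Category.assoc, Iso.hom_inv_id_assoc]

/-- Auxiliary: `IsDeviation` rephrased via the right action. -/
lemma isDeviation_iff {x y : A} (α α' : x ⟶ y) (β : 𝟙_ A ⟶ 𝟙_ A) :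
    IsDeviation α α' β ↔ α ≫ actR y β = α' := by
  have : (α ⊗ₘ β) ≫ (ρ_ y).hom = (ρ_ x).hom ≫ α ≫ actR y β := by
    rw [MonoidalCategory.tensorHom_def]
    simp [actR]
  rw [IsDeviation, this, cancel_epi]

end AuxAct

section AuxBraided

variable {A : Type u} [Category.{v} A] [MonoidalCategory A] [BraidedCategory A]

/-- Auxiliary: in a braided category the left and right `π₁`-actions agree. -/
lemma actL_eq_actR (x : A) (β : 𝟙_ A ⟶ 𝟙_ A) : actL x β = actR x β := by
  have h : (λ_ x).hom = (β_ (𝟙_ A) x).hom ≫ (ρ_ x).hom := (braiding_rightUnitor x).symm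
  have hinv : (λ_ x).inv = (ρ_ x).inv ≫ (β_ (𝟙_ A) x).inv := by
    rw [← cancel_mono (λ_ x).hom, Iso.inv_hom_id, h]; simp
  have hnat := BraidedCategory.braiding_naturality_left β x
  unfold actL actR
  rw [h, hinv]
  simp only [Category.assoc, reassoc_of% hnat, Iso.inv_hom_id_assoc]

/-- Auxiliary: the action is compatible with tensor products. -/
lemma actR_tensorObj (x y : A) (β₁ β₂ : 𝟙_ A ⟶ 𝟙_ A) :
    actR (x ⊗ y) (β₁ ≫ β₂) = actR x β₁ ⊗ₘ actR y β₂ := by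
  rw [actR_comp, MonoidalCategory.tensorHom_def, ← actL_eq_actR (x ⊗ y) β₁, actL_tensor,
    actL_eq_actR, actR_tensor]

end AuxBraided

/-- In a braided categorical group, if `α_i, α'_i : x_i ⟶ y_i` (`i = 1, 2`)
have deviations `β₁, β₂` respectively, then `α₁ + α₂` and `α'₁ + α'₂` have
deviation `β₁ + β₂`. -/
theorem deviation_tensor
    {A : Type u} [Groupoid.{v} A] [MonoidalCategory A] [BraidedCategory A]
    [CategoricalGroup A]
    {x₁ y₁ x₂ y₂ : A} (α₁ α'₁ : x₁ ⟶ y₁) (α₂ α'₂ : x₂ ⟶ y₂)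
    (β₁ β₂ : 𝟙_ A ⟶ 𝟙_ A)
    (h₁ : IsDeviation α₁ α'₁ β₁) (h₂ : IsDeviation α₂ α'₂ β₂) :
    IsDeviation (α₁ ⊗ₘ α₂) (α'₁ ⊗ₘ α'₂) (pi1Add β₁ β₂) := by
  rw [isDeviation_iff] at h₁ h₂ ⊢
  rw [pi1Add_eq_comp, actR_tensorObj, ← h₁, ← h₂, tensorHom_comp_tensorHom]
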